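/- For every a ∈ ℝ and every k ∈ ℕ, ∫_ℝ e^{2ax} h_k(x)² dx = e^{a²} · Σ_{j=0}^{k} (k choose j) · (2a²)^j / j!. -/

import Mathlib

open MeasureTheory

/-- The physicists' Hermite polynomial `H_k` on `ℝ`. -/
noncomputable def physHermiteR (k : ℕ) (x : ℝ) : ℝ :=
  (-1) ^ k * Real.exp (x ^ 2) * iteratedDeriv k (fun t : ℝ => Real.exp (-t ^ 2)) x

/-- The Hermite function `h_k` on `ℝ`. -/
noncomputable def hermiteFunR (k : ℕ) (x : ℝ) : ℝ :=
  (Real.sqrt (2 ^ k * Nat.factorial k * Real.sqrt Real.pi))⁻¹ *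
    physHermiteR k x * Real.exp (-x ^ 2 / 2)

open Polynomial Real


/-- Physicists' Hermite polynomials by recurrence. -/
noncomputable def Hp : ℕ → Polynomial ℝ
  | 0 => 1
  | (k+1) => 2 * Polynomial.X * Hp k - Polynomial.derivative (Hp k)

lemma Hp_succ (k : ℕ) : Hp (k+1) = 2 * Polynomial.X * Hp k - Polynomial.derivative (Hp k) := rfl

lemma Hp_deriv (k : ℕ) : Polynomial.derivative (Hp k) = Polynomial.C (2*(k:ℝ)) * Hp (k-1) := by
  induction k using Nat.twoStepInduction with
  | zero => simp [Hp]
  | one =>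
    simp only [Hp, Polynomial.derivative_one, mul_one, sub_zero, derivative_mul,
      derivative_ofNat, derivative_X, Nat.cast_one]
    rw [map_ofNat]; norm_num [Hp]
  | more k ih1 ih2 =>
    have ih2' : Polynomial.derivative (Hp (k+1)) = Polynomial.C (2*((k:ℝ)+1)) * Hp k := by
      rw [ih2]; push_cast; ring_nf
    rw [show k + 2 - 1 = k + 1 from rfl, Hp_succ (k+1), derivative_sub, derivative_mul, ih2']
    simp only [derivative_mul, derivative_C, derivative_ofNat, derivative_X, ih1]
    rw [Hp_succ k, ih1]
    push_cast
    simp only [map_mul, map_add, map_one, map_ofNat]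
    ring

/-- Rodrigues formula. -/
lemma iteratedDeriv_gauss (k : ℕ) (x : ℝ) :
    iteratedDeriv k (fun t : ℝ => Real.exp (-t ^ 2)) x
      = (-1 : ℝ)^k * (Hp k).eval x * Real.exp (-x^2) := by
  induction k generalizing x with
  | zero => simp [Hp]
  | succ k ih =>
    rw [iteratedDeriv_succ]
    have : deriv (iteratedDeriv k (fun t : ℝ => Real.exp (-t ^ 2))) x
        = deriv (fun y : ℝ => (-1 : ℝ)^k * (Hp k).eval y * Real.exp (-y^2)) x := by
      congr 1; funext y; exact ih y
    rw [this]
    have h1 : HasDerivAt (fun y : ℝ => (-1 : ℝ)^k * (Hp k).eval y * Real.exp (-y^2))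
        ((-1:ℝ)^k * ((Polynomial.derivative (Hp k)).eval x * Real.exp (-x^2)
          + (Hp k).eval x * ((-2*x) * Real.exp (-x^2)))) x := by
      have hp : HasDerivAt (fun y : ℝ => (Hp k).eval y) ((Polynomial.derivative (Hp k)).eval x) x :=
        Polynomial.hasDerivAt _ x
      have he : HasDerivAt (fun y : ℝ => Real.exp (-y^2)) ((-2*x) * Real.exp (-x^2)) x := by
        have h2 : HasDerivAt (fun y : ℝ => -y^2) (-(2*x)) x := by
          simpa using (hasDerivAt_pow 2 x).fun_neg
        simpa [mul_comm] using h2.exp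
      simpa [mul_assoc] using ((hp.mul he).const_mul ((-1:ℝ)^k))
    rw [h1.deriv, Hp_succ]
    simp only [Polynomial.eval_sub, Polynomial.eval_mul, Polynomial.eval_ofNat,
      Polynomial.eval_X]
    ring

lemma physHermiteR_eq (k : ℕ) (x : ℝ) :
    (fun t : ℝ => (-1) ^ k * Real.exp (t ^ 2) * iteratedDeriv k (fun t : ℝ => Real.exp (-t ^ 2)) t) x
      = (Hp k).eval x := by
  simp only []
  rw [iteratedDeriv_gauss]
  rw [show ((-1:ℝ)^k * Real.exp (x^2) * ((-1:ℝ)^k * (Hp k).eval x * Real.exp (-x^2)))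
      = ((-1:ℝ)^k)^2 * (Hp k).eval x * (Real.exp (x^2) * Real.exp (-x^2)) by ring]
  rw [← Real.exp_add]
  simp [← pow_mul, pow_mul']


lemma int_pow_gauss (n : ℕ) : Integrable (fun x : ℝ => x^n * Real.exp (-1 * x^2)) := by
  have := integrable_rpow_mul_exp_neg_mul_sq (b := 1) one_pos
    (s := (n : ℝ)) ((by norm_num : (-1:ℝ) < 0).trans_le (Nat.cast_nonneg n))
  simpa [Real.rpow_natCast] using this

lemma int_poly_gauss (p : Polynomial ℝ) :
    Integrable (fun x : ℝ => p.eval x * Real.exp (-1 * x^2)) := by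
  induction p using Polynomial.induction_on' with
  | add p q hp hq =>
    have := hp.fun_add hq
    simpa [add_mul] using this
  | monomial n c =>
    have := (int_pow_gauss n).const_mul c
    simpa [Polynomial.eval_monomial, mul_assoc] using this

lemma int_poly_w (a : ℝ) (p : Polynomial ℝ) :
    Integrable (fun x : ℝ => p.eval x * Real.exp (2*a*x - x^2)) := by
  have key : ∀ x : ℝ, p.eval x * Real.exp (2*a*x - x^2)
      = Real.exp (a^2) * ((p.comp (Polynomial.X + Polynomial.C a)).eval (x - a)
          * Real.exp (-1 * (x - a)^2)) := by
    intro x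
    rw [Polynomial.eval_comp]
    simp only [Polynomial.eval_add, Polynomial.eval_X, Polynomial.eval_C, sub_add_cancel]
    have harg : 2*a*x - x^2 = a^2 + (-1*(x-a)^2) := by ring
    rw [harg, Real.exp_add]; ring
  simp only [key]
  exact ((int_poly_gauss _).comp_sub_right a).const_mul _

/-- The weighted integral functional. -/
noncomputable def Mw (a : ℝ) (p : Polynomial ℝ) : ℝ :=
  ∫ x : ℝ, p.eval x * Real.exp (2*a*x - x^2)

lemma Mw_add (a : ℝ) (p q : Polynomial ℝ) : Mw a (p + q) = Mw a p + Mw a q := by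
  unfold Mw
  rw [← integral_add (int_poly_w a p) (int_poly_w a q)]
  congr 1; funext x; simp [add_mul]

lemma Mw_sub (a : ℝ) (p q : Polynomial ℝ) : Mw a (p - q) = Mw a p - Mw a q := by
  unfold Mw
  rw [← integral_sub (int_poly_w a p) (int_poly_w a q)]
  congr 1; funext x; simp [sub_mul]

lemma Mw_Cmul (a c : ℝ) (p : Polynomial ℝ) : Mw a (Polynomial.C c * p) = c * Mw a p := by
  unfold Mw
  rw [← integral_const_mul]
  congr 1; funext x; simp [mul_assoc]

lemma Mw_one (a : ℝ) : Mw a 1 = Real.exp (a^2) * Real.sqrt Real.pi := by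
  unfold Mw
  have key : ∀ x : ℝ, (1 : Polynomial ℝ).eval x * Real.exp (2*a*x - x^2)
      = Real.exp (a^2) * (fun y : ℝ => Real.exp (-1 * y^2)) (x - a) := by
    intro x
    simp only [Polynomial.eval_one, one_mul]
    have harg : 2*a*x - x^2 = a^2 + (-1*(x-a)^2) := by ring
    rw [harg, Real.exp_add]
  simp only [key]
  rw [integral_const_mul, integral_sub_right_eq_self (fun y : ℝ => Real.exp (-1 * y^2)) a,
    integral_gaussian]
  norm_num

/-- The key integration-by-parts-free identity. -/
lemma Mw_key (a : ℝ) (p : Polynomial ℝ) :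
    Mw a (2 * Polynomial.X * p) = Mw a (Polynomial.derivative p) + 2 * a * Mw a p := by
  have h0 : ∫ x : ℝ, ((Polynomial.derivative p + (Polynomial.C (2*a) - 2 * Polynomial.X) * p).eval x
      * Real.exp (2*a*x - x^2)) = 0 := by
    apply integral_eq_zero_of_hasDerivAt_of_integrable
      (f := fun x : ℝ => p.eval x * Real.exp (2*a*x - x^2))
    · intro x
      have hp : HasDerivAt (fun y : ℝ => p.eval y) ((Polynomial.derivative p).eval x) x :=
        Polynomial.hasDerivAt _ x
      have he : HasDerivAt (fun y : ℝ => Real.exp (2*a*y - y^2))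
          ((2*a - 2*x) * Real.exp (2*a*x - x^2)) x := by
        have h2 : HasDerivAt (fun y : ℝ => 2*a*y - y^2) (2*a - 2*x) x := by
          have := ((hasDerivAt_id x).const_mul (2*a)).fun_sub (hasDerivAt_pow 2 x)
          simpa using this
        simpa [mul_comm] using h2.exp
      have := hp.fun_mul he
      convert this using 1
      · rfl
      simp only [Polynomial.eval_add, Polynomial.eval_sub, Polynomial.eval_mul,
        Polynomial.eval_C, Polynomial.eval_X, Polynomial.eval_ofNat]
      ring
    · exact int_poly_w a _
    · exact int_poly_w a p
  have h1 : Mw a (Polynomial.derivative p + (Polynomial.C (2*a) - 2 * Polynomial.X) * p) = 0 := h0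
  rw [sub_mul, Mw_add, Mw_sub, Mw_Cmul] at h1
  linarith
lemma MP_base (a : ℝ) (j : ℕ) :
    Mw a (Hp j) = (2*a)^j * (Real.exp (a^2) * Real.sqrt Real.pi) := by
  induction j with
  | zero => simpa [Hp] using Mw_one a
  | succ j ih =>
    rw [Hp_succ j, Mw_sub, Mw_key a (Hp j), ih, pow_succ]
    ring

lemma Mw_rec (a : ℝ) (j l : ℕ) :
    Mw a (Hp j * Hp (l+1))
      = 2*(j:ℝ) * Mw a (Hp (j-1) * Hp l) + 2*a * Mw a (Hp j * Hp l) := by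
  have h1 : Hp j * Hp (l+1)
      = 2 * Polynomial.X * (Hp j * Hp l) - Hp j * Polynomial.derivative (Hp l) := by
    rw [Hp_succ l]; ring
  rw [h1, Mw_sub, Mw_key, derivative_mul, Mw_add, Hp_deriv j]
  rw [mul_assoc, Mw_Cmul]
  ring

lemma nat_h (j i : ℕ) : (j:ℝ) * ((j-1).choose i) = (j.choose (i+1)) * (i+1) := by
  cases j with
  | zero => simp
  | succ n =>
    have := Nat.add_one_mul_choose_eq n i
    exact_mod_cast congrArg (Nat.cast : ℕ → ℝ) this

lemma sumId (a : ℝ) (j l : ℕ) :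
    (∑ i ∈ Finset.range (l+2), (j.choose i : ℝ) * ((l+1).choose i) * (Nat.factorial i)
        * 2^i * (2*a)^(j-i) * (2*a)^(l+1-i))
    = 2*(j:ℝ) * (∑ i ∈ Finset.range (l+1), ((j-1).choose i : ℝ) * (l.choose i) * (Nat.factorial i)
        * 2^i * (2*a)^(j-1-i) * (2*a)^(l-i))
      + 2*a * (∑ i ∈ Finset.range (l+1), (j.choose i : ℝ) * (l.choose i) * (Nat.factorial i)
        * 2^i * (2*a)^(j-i) * (2*a)^(l-i)) := by
  set A : ℕ → ℝ := fun i => (j.choose i : ℝ) * (l.choose i) * (Nat.factorial i)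
      * 2^i * (2*a)^(j-i) * (2*a)^(l+1-i) with hA
  have step1 : 2*a * (∑ i ∈ Finset.range (l+1), (j.choose i : ℝ) * (l.choose i)
      * (Nat.factorial i) * 2^i * (2*a)^(j-i) * (2*a)^(l-i))
      = ∑ i ∈ Finset.range (l+1), A i := by
    rw [Finset.mul_sum]
    refine Finset.sum_congr rfl fun i hi => ?_
    have hi' : i ≤ l := Nat.lt_succ_iff.mp (Finset.mem_range.mp hi)
    have h2 : l+1-i = (l-i)+1 := by omega
    rw [hA]; simp only []
    rw [h2, pow_succ]; ring
  have step2 : ∑ i ∈ Finset.range (l+1), A i = ∑ i ∈ Finset.range (l+2), A i := by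
    rw [Finset.sum_range_succ (f := A) (n := l+1)]
    simp [hA, Nat.choose_succ_self]
  rw [step1, step2, Finset.sum_range_succ' A (l+1),
    Finset.sum_range_succ' (fun i => (j.choose i : ℝ) * ((l+1).choose i) * (Nat.factorial i)
        * 2^i * (2*a)^(j-i) * (2*a)^(l+1-i)) (l+1)]
  have hzero : (j.choose 0 : ℝ) * ((l+1).choose 0) * (Nat.factorial 0)
        * 2^0 * (2*a)^(j-0) * (2*a)^(l+1-0) = A 0 := by
    simp [hA]
  rw [hzero]
  rw [Finset.mul_sum]
  have main : ∀ i ∈ Finset.range (l+1),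
      (j.choose (i+1) : ℝ) * ((l+1).choose (i+1)) * (Nat.factorial (i+1))
        * 2^(i+1) * (2*a)^(j-(i+1)) * (2*a)^(l+1-(i+1))
      = 2*(j:ℝ) * (((j-1).choose i : ℝ) * (l.choose i) * (Nat.factorial i)
          * 2^i * (2*a)^(j-1-i) * (2*a)^(l-i)) + A (i+1) := by
    intro i _
    have e1 : l+1-(i+1) = l-i := by omega
    have e2 : j-(i+1) = j-1-i := by omega
    rw [hA]; simp only []
    rw [e1, e2, Nat.choose_succ_succ, Nat.factorial_succ, pow_succ]
    push_cast
    linear_combination (-(2:ℝ) * ((l.choose i):ℝ) * (Nat.factorial i) * 2^i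
      * (2*a)^(j-1-i) * (2*a)^(l-i)) * (nat_h j i)
  rw [Finset.sum_congr rfl main, Finset.sum_add_distrib]
  ring

lemma Mw_closed (a : ℝ) : ∀ l j, Mw a (Hp j * Hp l)
    = (Real.exp (a^2) * Real.sqrt Real.pi)
      * ∑ i ∈ Finset.range (l+1), (j.choose i : ℝ) * (l.choose i) * (Nat.factorial i)
          * 2^i * (2*a)^(j-i) * (2*a)^(l-i) := by
  intro l
  induction l with
  | zero =>
    intro j
    have h0 : Hp 0 = 1 := rfl
    rw [h0, mul_one, MP_base]
    simp [Finset.sum_range_one]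
    ring
  | succ l ih =>
    intro j
    rw [Mw_rec, ih, ih, sumId]
    ring
lemma physHermiteR_eval (k : ℕ) (x : ℝ) : physHermiteR k x = (Hp k).eval x := by
  rw [physHermiteR, iteratedDeriv_gauss]
  rw [show ((-1:ℝ)^k * Real.exp (x^2) * ((-1:ℝ)^k * (Hp k).eval x * Real.exp (-x^2)))
      = ((-1:ℝ)^k)^2 * (Hp k).eval x * (Real.exp (x^2) * Real.exp (-x^2)) by ring]
  rw [← Real.exp_add]
  simp [← pow_mul, pow_mul']

/-- `∫ℝ e^{2ax} h_k(x)² dx = e^{a²} L_k^0(-2a²)`, the right-hand side written via the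
explicit formula for the Laguerre polynomial. -/
theorem stmt_6 (a : ℝ) (k : ℕ) :
    ∫ x : ℝ, Real.exp (2 * a * x) * hermiteFunR k x ^ 2
      = Real.exp (a ^ 2) *
          ∑ j ∈ Finset.range (k + 1),
            (Nat.choose k j : ℝ) * (2 * a ^ 2) ^ j / (Nat.factorial j : ℝ) := by
  have hNpos : (0:ℝ) < 2 ^ k * (Nat.factorial k : ℝ) * Real.sqrt Real.pi := by
    have := Real.sqrt_pos.mpr Real.pi_pos
    positivity
  have hfun : ∀ x : ℝ, Real.exp (2*a*x) * hermiteFunR k x ^ 2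
      = (2 ^ k * (Nat.factorial k : ℝ) * Real.sqrt Real.pi)⁻¹
        * ((Hp k * Hp k).eval x * Real.exp (2*a*x - x^2)) := by
    intro x
    rw [hermiteFunR, physHermiteR_eval]
    have h1 : Real.exp (-x^2/2) ^ 2 = Real.exp (-(x^2)) := by
      rw [sq, ← Real.exp_add]; ring_nf
    have h2 : ((Real.sqrt (2 ^ k * (Nat.factorial k : ℝ) * Real.sqrt Real.pi))⁻¹)^2
        = (2 ^ k * (Nat.factorial k : ℝ) * Real.sqrt Real.pi)⁻¹ := by
      rw [← Real.sqrt_inv, Real.sq_sqrt (by positivity)]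
    have h3 : Real.exp (-(x^2)) * Real.exp (2*a*x) = Real.exp (2*a*x - x^2) := by
      rw [← Real.exp_add]; ring_nf
    rw [Polynomial.eval_mul]
    calc Real.exp (2*a*x) * ((Real.sqrt (2 ^ k * (Nat.factorial k : ℝ) * Real.sqrt Real.pi))⁻¹
            * (Hp k).eval x * Real.exp (-x^2/2)) ^ 2
        = ((Real.sqrt (2 ^ k * (Nat.factorial k : ℝ) * Real.sqrt Real.pi))⁻¹)^2
            * ((Hp k).eval x * (Hp k).eval x)
            * (Real.exp (-x^2/2) ^ 2 * Real.exp (2*a*x)) := by ring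
      _ = _ := by rw [h1, h2, h3]; ring
  simp only [hfun]
  rw [integral_const_mul]
  have : (∫ x : ℝ, (Hp k * Hp k).eval x * Real.exp (2*a*x - x^2)) = Mw a (Hp k * Hp k) := rfl
  rw [this, Mw_closed a k k]
  rw [show ∑ j ∈ Finset.range (k + 1), (Nat.choose k j : ℝ) * (2 * a ^ 2) ^ j / (Nat.factorial j : ℝ)
      = ∑ j ∈ Finset.range (k + 1),
          (Nat.choose k (k - j) : ℝ) * (2 * a ^ 2) ^ (k - j) / (Nat.factorial (k - j) : ℝ) by
    rw [← Finset.sum_range_reflect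
      (fun j => (Nat.choose k j : ℝ) * (2 * a ^ 2) ^ j / (Nat.factorial j : ℝ)) (k+1)]
    simp]
  rw [Finset.mul_sum, Finset.mul_sum, Finset.mul_sum]
  refine Finset.sum_congr rfl fun i hi => ?_
  have hik : i ≤ k := Nat.lt_succ_iff.mp (Finset.mem_range.mp hi)
  rw [Nat.choose_symm hik]
  have hfact : (Nat.choose k i : ℝ) * (Nat.factorial i) * (Nat.factorial (k-i))
      = (Nat.factorial k : ℝ) := by
    exact_mod_cast congrArg (Nat.cast : ℕ → ℝ) (Nat.choose_mul_factorial_mul_factorial hik)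
  have h2pow : (2:ℝ)^i * 2^(k-i) = 2^k := by
    rw [← pow_add]; congr 1; omega
  have hapow : (2*a)^(k-i) * (2*a)^(k-i) = 2^(k-i) * (2*a^2)^(k-i) := by
    rw [← mul_pow, ← mul_pow]; congr 1; ring
  have hπ : Real.sqrt Real.pi ≠ 0 := ne_of_gt (Real.sqrt_pos.mpr Real.pi_pos)
  have hk : (Nat.factorial k : ℝ) ≠ 0 := Nat.cast_ne_zero.mpr (Nat.factorial_ne_zero k)
  have hm : (Nat.factorial (k-i) : ℝ) ≠ 0 := Nat.cast_ne_zero.mpr (Nat.factorial_ne_zero _)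
  have h2k : ((2:ℝ)^k) ≠ 0 := by positivity
  rw [show ((Nat.choose k i : ℝ) * (Nat.choose k i : ℝ) * (Nat.factorial i) * 2^i
        * (2*a)^(k-i) * (2*a)^(k-i))
      = (Nat.choose k i : ℝ) * (Nat.choose k i : ℝ) * (Nat.factorial i)
        * (2^i * ((2*a)^(k-i) * (2*a)^(k-i))) by ring, hapow,
    show ((2:ℝ)^i * (2^(k-i) * (2*a^2)^(k-i))) = (2^i * 2^(k-i)) * (2*a^2)^(k-i) by ring, h2pow]
  field_simp
  linear_combination ((Nat.choose k i : ℝ)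
    * (2*a^2)^(k-i)) * hfact
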